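/- Alternating-trace containment implies the trace-based game relation: if s₁ ≤_atc s₂ then s₁ ≤_{∀∀∃∃}^{tb} s₂. -/

import Mathlib

/-- An interface automaton over inputs `In`, outputs `Out`, states `State`. -/
structure IA (In Out State : Type) where
  init : State
  tr : State → (In ⊕ Out) → State → Prop

namespace IA

variable {In Out State State1 State2 State3 : Type}

/-- One-step successor sets. -/
def step (s : IA In Out State) (P : Set State) (ℓ : In ⊕ Out) : Set State :=
  {q' | ∃ q ∈ P, s.tr q ℓ q'}

/-- `s after σ`: states reachable from the initial state via word `σ`. -/
def after (s : IA In Out State) (σ : List (In ⊕ Out)) : Set State :=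
  σ.foldl s.step {s.init}

/-- Traces of `s`. -/
def traces (s : IA In Out State) : Set (List (In ⊕ Out)) :=
  {σ | (s.after σ).Nonempty}

/-- Inputs enabled in *all* states of `P`. -/
def inSet (s : IA In Out State) (P : Set State) : Set In :=
  {a | ∀ q ∈ P, ∃ q', s.tr q (Sum.inl a) q'}

/-- Outputs enabled in *some* state of `P`. -/
def outSet (s : IA In Out State) (P : Set State) : Set Out :=
  {x | ∃ q ∈ P, ∃ q', s.tr q (Sum.inr x) q'}

end IA

/-- Input-failure traces: a word over `L = In ⊕ Out` possibly followed by a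
    final input-failure symbol `ā` (encoded as `some a`). -/
abbrev FTrace (In Out : Type) := List (In ⊕ Out) × Option In

/-- A set of input-failure traces is input-failure closed. -/
def fclosed {In Out : Type} (S : Set (FTrace In Out)) : Prop :=
  ∀ (σ : List (In ⊕ Out)) (a : In) (ρ : FTrace In Out),
    (σ, some a) ∈ S → (σ ++ Sum.inl a :: ρ.1, ρ.2) ∈ S

/-- Input-failure closure. -/
def fcl {In Out : Type} (S : Set (FTrace In Out)) : Set (FTrace In Out) :=
  S ∪ {t | ∃ (σ : List (In ⊕ Out)) (a : In) (ρ : FTrace In Out),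
        (σ, some a) ∈ S ∧ t = (σ ++ Sum.inl a :: ρ.1, ρ.2)}

namespace IA

variable {In Out State State1 State2 State3 : Type}

/-- Input-failure traces of an IA. -/
def Ftraces (s : IA In Out State) : Set (FTrace In Out) :=
  {t | (t.2 = none ∧ t.1 ∈ s.traces) ∨
       (∃ a, t.2 = some a ∧ a ∉ s.inSet (s.after t.1))}

/-- Input-failure refinement. -/
def refIF (s1 : IA In Out State1) (s2 : IA In Out State2) : Prop :=
  s1.Ftraces ⊆ fcl s2.Ftraces

/-- Output-existential words of `s`. -/
def OE (s : IA In Out State) : Set (List (In ⊕ Out)) :=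
  {σ | ∀ ρ x τ, σ = ρ ++ Sum.inr x :: τ → x ∈ s.outSet (s.after ρ)}

/-- Input-universal words of `s`. -/
def IU (s : IA In Out State) : Set (List (In ⊕ Out)) :=
  {σ | ∀ ρ a τ, σ = ρ ++ Sum.inl a :: τ → a ∈ s.inSet (s.after ρ)}

/-- Input-universal / output-existential refinement. -/
def refIUOE (s1 : IA In Out State1) (s2 : IA In Out State2) : Prop :=
  s1.OE ∩ s2.IU ⊆ s1.IU ∩ s2.OE

/-- Utraces: traces where every occurring input is enabled in all states
    reached by the preceding prefix. -/
def Utraces (s : IA In Out State) : Set (List (In ⊕ Out)) :=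
  {σ | σ ∈ s.traces ∧
       ∀ ρ a, (ρ ++ [Sum.inl a]) <+: σ → a ∈ s.inSet (s.after ρ)}

/-- `Δ`: add a `δ`-selfloop (a fresh output) to each quiescent state. -/
def delta (s : IA In Out State) : IA In (Out ⊕ Unit) State where
  init := s.init
  tr := fun q ℓ q' =>
    match ℓ with
    | Sum.inl a => s.tr q (Sum.inl a) q'
    | Sum.inr (Sum.inl x) => s.tr q (Sum.inr x) q'
    | Sum.inr (Sum.inr _) => q' = q ∧ ∀ x q'', ¬ s.tr q (Sum.inr x) q''

/-- `i uioco s`. -/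
def uioco (i : IA In Out State1) (s : IA In Out State2) : Prop :=
  ∀ σ ∈ (delta s).Utraces,
    (delta i).outSet ((delta i).after σ) ⊆ (delta s).outSet ((delta s).after σ) ∧
    (delta s).inSet ((delta s).after σ) ⊆ (delta i).inSet ((delta i).after σ)

/-! ### Game framework -/

/-- A (finite) path: a list of (label, target-state) steps from the initial state. -/
abbrev Path (In Out State : Type) := List ((In ⊕ Out) × State)

/-- The state reached just before step `n` of `π` (the initial state for `n = 0`). -/
def stateAt (s : IA In Out State) (π : Path In Out State) : ℕ → State
  | 0 => s.init
  | Nat.succ m => ((π[m]?).map Prod.snd).getD s.init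

/-- The final state of a path. -/
def lastState (s : IA In Out State) (π : Path In Out State) : State :=
  stateAt s π π.length

/-- Validity of a path. -/
def IsPath (s : IA In Out State) (π : Path In Out State) : Prop :=
  ∀ n p, π[n]? = some p → s.tr (stateAt s π n) p.1 p.2

/-- Output strategies. -/
structure OutStrat (s : IA In Out State) where
  f : Path In Out State → Option Out
  valid : ∀ π x, IsPath s π → f π = some x →
    ∃ q', s.tr (lastState s π) (Sum.inr x) q'

/-- Input strategies. -/
structure InStrat (s : IA In Out State) where
  f : Path In Out State → Option In
  valid : ∀ π a, IsPath s π → f π = some a →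
    ∃ q', s.tr (lastState s π) (Sum.inl a) q'

/-- Determinization strategies. -/
structure DetStrat (s : IA In Out State) where
  f : Path In Out State → (In ⊕ Out) → Option State
  total : ∀ π ℓ, IsPath s π → (∃ q', s.tr (lastState s π) ℓ q') → (f π ℓ).isSome
  valid : ∀ π ℓ q', IsPath s π → f π ℓ = some q' → s.tr (lastState s π) ℓ q'

/-- Race-condition strategies: `false` = prefer input, `true` = prefer output. -/
abbrev RaceStrat (In Out State : Type) := Path In Out State → Bool

/-- An input strategy is trace-based if it depends only on the trace of the path. -/
def TraceBased (s : IA In Out State) (fi : InStrat s) : Prop :=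
  ∀ π π', IsPath s π → IsPath s π' →
    π.map Prod.fst = π'.map Prod.fst → fi.f π = fi.f π'

/-- Extend a path by label `ℓ` using the determinization strategy. -/
def push (s : IA In Out State) (fd : DetStrat s) (π : Path In Out State)
    (ℓ : In ⊕ Out) : Path In Out State :=
  match fd.f π ℓ with
  | some q => π ++ [(ℓ, q)]
  | none => π

/-- One step of the strategy-driven execution. -/
def gstep (s : IA In Out State) (fi : InStrat s) (fo : OutStrat s)
    (fd : DetStrat s) (fr : RaceStrat In Out State)
    (π : Path In Out State) : Path In Out State :=
  match fi.f π, fo.f π with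
  | some a, none => push s fd π (Sum.inl a)
  | none, some x => push s fd π (Sum.inr x)
  | some a, some x => if fr π then push s fd π (Sum.inr x) else push s fd π (Sum.inl a)
  | none, none => π

/-- The `n`-th label of the (finite or infinite) outcome of the four strategies. -/
def outcomeTrace (s : IA In Out State) (fi : InStrat s) (fo : OutStrat s)
    (fd : DetStrat s) (fr : RaceStrat In Out State) (n : ℕ) : Option (In ⊕ Out) :=
  (((gstep s fi fo fd fr)^[n + 1] ([] : Path In Out State))[n]?).map Prod.fst

/-- Alternating-trace containment for IA. -/
def refATC (s1 : IA In Out State1) (s2 : IA In Out State2) : Prop :=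
  ∀ (fo1 : OutStrat s1) (fd1 : DetStrat s1) (fr1 : RaceStrat In Out State1),
  ∃ (fo2 : OutStrat s2) (fd2 : DetStrat s2) (fr2 : RaceStrat In Out State2),
  ∀ (fi2 : InStrat s2), ∃ (fi1 : InStrat s1),
    ∀ n, outcomeTrace s1 fi1 fo1 fd1 fr1 n = outcomeTrace s2 fi2 fo2 fd2 fr2 n

/-- The reordered, trace-based game relation `≤_{∀∀∃∃}^{tb}`. -/
def refAAEEtb (s1 : IA In Out State1) (s2 : IA In Out State2) : Prop :=
  ∀ (fi2 : InStrat s2), TraceBased s2 fi2 →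
  ∀ (fo1 : OutStrat s1) (fd1 : DetStrat s1) (fr1 : RaceStrat In Out State1),
  ∃ (fi1 : InStrat s1), TraceBased s1 fi1 ∧
  ∃ (fo2 : OutStrat s2) (fd2 : DetStrat s2) (fr2 : RaceStrat In Out State2),
    ∀ n, outcomeTrace s1 fi1 fo1 fd1 fr1 n = outcomeTrace s2 fi2 fo2 fd2 fr2 n

/-- Alternating simulation. -/
def IsAltSim (s1 : IA In Out State1) (s2 : IA In Out State2)
    (R : State1 → State2 → Prop) : Prop :=
  ∀ q1 q2, R q1 q2 →
    (s1.outSet {q1} ⊆ s2.outSet {q2}) ∧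
    (s2.inSet {q2} ⊆ s1.inSet {q1}) ∧
    (∀ a q1', a ∈ s2.inSet {q2} → s1.tr q1 (Sum.inl a) q1' →
       ∃ q2', s2.tr q2 (Sum.inl a) q2' ∧ R q1' q2') ∧
    (∀ x q1', s1.tr q1 (Sum.inr x) q1' →
       ∃ q2', s2.tr q2 (Sum.inr x) q2' ∧ R q1' q2')

/-- Greatest alternating simulation relates the initial states. -/
def refAS (s1 : IA In Out State1) (s2 : IA In Out State2) : Prop :=
  ∃ R, IsAltSim s1 s2 R ∧ R s1.init s2.init

/-- Image finiteness. -/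
def ImageFinite (s : IA In Out State) : Prop :=
  ∀ q ℓ, {q' | s.tr q ℓ q'}.Finite

/-- Input-universal determinization (subset construction restricted to
    universally enabled inputs and existentially enabled outputs). -/
def detIU (s : IA In Out State) : IA In Out (Set State) where
  init := {s.init}
  tr := fun P ℓ P' => P.Nonempty ∧
    (match ℓ with
     | Sum.inl a => a ∈ s.inSet P
     | Sum.inr x => x ∈ s.outSet P) ∧
    P' = s.step P ℓ

end IA

namespace IAAux

open IA

variable {In Out State : Type} {s : IA In Out State}

lemma lastState_nil : lastState s ([] : Path In Out State) = s.init := rfl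

lemma stateAt_prefix (π ρ : Path In Out State) {n : ℕ} (h : n ≤ π.length) :
    stateAt s (π ++ ρ) n = stateAt s π n := by
  cases n with
  | zero => rfl
  | succ m =>
    simp only [stateAt]
    rw [List.getElem?_append_left (by omega)]

lemma lastState_concat (π : Path In Out State) (e : (In ⊕ Out) × State) :
    lastState s (π ++ [e]) = e.2 := by
  simp only [lastState, stateAt, List.length_append, List.length_singleton]
  rw [List.getElem?_concat_length]
  rfl

lemma isPath_concat {π : Path In Out State} {ℓ : In ⊕ Out} {q : State}
    (hπ : IsPath s π) (htr : s.tr (lastState s π) ℓ q) :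
    IsPath s (π ++ [(ℓ, q)]) := by
  intro n p hp
  have hn : n < π.length + 1 := by
    have := List.getElem?_eq_some_iff.1 hp
    simpa using this.1
  rcases Nat.lt_or_ge n π.length with hlt | hge
  · rw [List.getElem?_append_left hlt] at hp
    rw [stateAt_prefix _ _ (le_of_lt hlt)]
    exact hπ n p hp
  · have hne : n = π.length := by omega
    subst hne
    rw [List.getElem?_concat_length] at hp
    cases hp
    rw [stateAt_prefix _ _ (le_refl _)]
    exact htr

lemma isPath_prefix {π ρ : Path In Out State} (h : IsPath s (π ++ ρ)) : IsPath s π := by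
  intro n p hp
  have hn : n < π.length := (List.getElem?_eq_some_iff.1 hp).1
  have := h n p (by rw [List.getElem?_append_left hn]; exact hp)
  rwa [stateAt_prefix _ _ (le_of_lt hn)] at this

lemma isPath_nil : IsPath s ([] : Path In Out State) := by
  intro n p hp
  simp at hp

end IAAux
namespace IAAux

open IA

variable {In Out State : Type} {s : IA In Out State}

variable (s) in
/-- The play after `n` steps. -/
def play (fi : InStrat s) (fo : OutStrat s) (fd : DetStrat s)
    (fr : RaceStrat In Out State) (n : ℕ) : Path In Out State :=
  (gstep s fi fo fd fr)^[n] ([] : Path In Out State)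

variable {fi : InStrat s} {fo : OutStrat s} {fd : DetStrat s} {fr : RaceStrat In Out State}

lemma play_zero : play s fi fo fd fr 0 = [] := rfl

lemma play_succ (n : ℕ) :
    play s fi fo fd fr (n + 1) = gstep s fi fo fd fr (play s fi fo fd fr n) := by
  simp [play, Function.iterate_succ_apply']

lemma outcomeTrace_eq (n : ℕ) :
    outcomeTrace s fi fo fd fr n = ((play s fi fo fd fr (n + 1))[n]?).map Prod.fst := rfl

lemma push_eq {π : Path In Out State} {ℓ : In ⊕ Out} (hπ : IsPath s π)
    (hen : ∃ q', s.tr (lastState s π) ℓ q') :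
    ∃ q, fd.f π ℓ = some q ∧ s.tr (lastState s π) ℓ q ∧
      push s fd π ℓ = π ++ [(ℓ, q)] := by
  have htot := fd.total π ℓ hπ hen
  obtain ⟨q, hq⟩ := Option.isSome_iff_exists.1 htot
  refine ⟨q, hq, fd.valid π ℓ q hπ hq, ?_⟩
  simp [IA.push, hq]

lemma gstep_cases {π : Path In Out State} (hπ : IsPath s π) :
    (fi.f π = none ∧ fo.f π = none ∧ gstep s fi fo fd fr π = π) ∨
    ∃ ℓ q, gstep s fi fo fd fr π = π ++ [(ℓ, q)] ∧ s.tr (lastState s π) ℓ q ∧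
      fd.f π ℓ = some q ∧
      ((∃ a, ℓ = Sum.inl a ∧ fi.f π = some a) ∨
       (∃ x, ℓ = Sum.inr x ∧ fo.f π = some x)) := by
  unfold gstep
  cases hfi : fi.f π with
  | none =>
    cases hfo : fo.f π with
    | none => exact Or.inl ⟨rfl, rfl, rfl⟩
    | some x =>
      obtain ⟨q, h1, h2, h3⟩ := push_eq hπ (fo.valid π x hπ hfo)
      exact Or.inr ⟨Sum.inr x, q, h3, h2, h1, Or.inr ⟨x, rfl, rfl⟩⟩
  | some a =>
    cases hfo : fo.f π with
    | none =>
      obtain ⟨q, h1, h2, h3⟩ := push_eq hπ (fi.valid π a hπ hfi)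
      exact Or.inr ⟨Sum.inl a, q, h3, h2, h1, Or.inl ⟨a, rfl, rfl⟩⟩
    | some x =>
      by_cases hr : fr π
      · simp only [hr, if_true]
        obtain ⟨q, h1, h2, h3⟩ := push_eq hπ (fo.valid π x hπ hfo)
        exact Or.inr ⟨Sum.inr x, q, h3, h2, h1, Or.inr ⟨x, rfl, rfl⟩⟩
      · simp only [hr, if_false]
        obtain ⟨q, h1, h2, h3⟩ := push_eq hπ (fi.valid π a hπ hfi)
        exact Or.inr ⟨Sum.inl a, q, h3, h2, h1, Or.inl ⟨a, rfl, rfl⟩⟩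

lemma isPath_play (n : ℕ) : IsPath s (play s fi fo fd fr n) := by
  induction n with
  | zero => exact isPath_nil
  | succ n ih =>
    rw [play_succ]
    rcases gstep_cases (fi := fi) (fo := fo) (fd := fd) (fr := fr) ih with
      ⟨_, _, he⟩ | ⟨ℓ, q, he, htr, _, _⟩
    · rw [he]; exact ih
    · rw [he]; exact isPath_concat ih htr

lemma play_length_succ_le (n : ℕ) :
    (play s fi fo fd fr (n + 1)).length ≤ (play s fi fo fd fr n).length + 1 := by
  rw [play_succ]
  rcases gstep_cases (fi := fi) (fo := fo) (fd := fd) (fr := fr) (isPath_play n) with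
    ⟨_, _, he⟩ | ⟨ℓ, q, he, _, _, _⟩
  · rw [he]; omega
  · rw [he]; simp

lemma play_length_le (n : ℕ) : (play s fi fo fd fr n).length ≤ n := by
  induction n with
  | zero => simp [play_zero]
  | succ n ih => have := play_length_succ_le (fi := fi) (fo := fo) (fd := fd) (fr := fr) n; omega

lemma play_prefix_succ (n : ℕ) : play s fi fo fd fr n <+: play s fi fo fd fr (n + 1) := by
  rw [play_succ]
  rcases gstep_cases (fi := fi) (fo := fo) (fd := fd) (fr := fr) (isPath_play n) with
    ⟨_, _, he⟩ | ⟨ℓ, q, he, _, _, _⟩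
  · rw [he]
  · rw [he]; exact List.prefix_append _ _

lemma play_prefix {n m : ℕ} (h : n ≤ m) : play s fi fo fd fr n <+: play s fi fo fd fr m := by
  induction m with
  | zero => simp_all
  | succ m ih =>
    rcases Nat.lt_or_ge n (m + 1) with hlt | hge
    · exact (ih (by omega)).trans (play_prefix_succ m)
    · have : n = m + 1 := by omega
      subst this; rfl

lemma stall_of_lt : ∀ n, (play s fi fo fd fr n).length < n →
    gstep s fi fo fd fr (play s fi fo fd fr n) = play s fi fo fd fr n := by
  intro n
  induction n with
  | zero => omega
  | succ n ih =>
    intro hlen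
    by_cases hn : (play s fi fo fd fr n).length = n
    · rcases gstep_cases (fi := fi) (fo := fo) (fd := fd) (fr := fr) (isPath_play n) with
        ⟨_, _, he⟩ | ⟨ℓ, q, he, _, _, _⟩
      · have hp : play s fi fo fd fr (n + 1) = play s fi fo fd fr n := by rw [play_succ, he]
        rw [hp, he]
      · exfalso
        rw [play_succ, he] at hlen
        simp at hlen; omega
    · have h1 : (play s fi fo fd fr n).length < n :=
        lt_of_le_of_ne (play_length_le n) hn
      have h2 := ih h1
      have hp : play s fi fo fd fr (n + 1) = play s fi fo fd fr n := by rw [play_succ, h2]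
      rw [hp, h2]

lemma play_succ_eq_of_lt {n : ℕ} (h : (play s fi fo fd fr n).length < n) :
    play s fi fo fd fr (n + 1) = play s fi fo fd fr n := by
  rw [play_succ]; exact stall_of_lt n h

lemma play_self : ∀ n, play s fi fo fd fr ((play s fi fo fd fr n).length) = play s fi fo fd fr n := by
  intro n
  induction n with
  | zero => rfl
  | succ n ih =>
    by_cases hn : (play s fi fo fd fr n).length = n
    · rcases gstep_cases (fi := fi) (fo := fo) (fd := fd) (fr := fr) (isPath_play n) with
        ⟨_, _, he⟩ | ⟨ℓ, q, he, _, _, _⟩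
      · have he' : play s fi fo fd fr (n + 1) = play s fi fo fd fr n := by rw [play_succ, he]
        rw [he', ih]
      · have he' : play s fi fo fd fr (n + 1) =
            play s fi fo fd fr n ++ [(ℓ, q)] := by rw [play_succ, he]
        have hlen : (play s fi fo fd fr (n + 1)).length = n + 1 := by
          rw [he']; simp [hn]
        rw [hlen]
    · have h1 : (play s fi fo fd fr n).length < n :=
        lt_of_le_of_ne (play_length_le n) hn
      have he' := play_succ_eq_of_lt h1
      rw [he', ih]

lemma outcome_eq_some {n : ℕ} {ℓ : In ⊕ Out}
    (h : outcomeTrace s fi fo fd fr n = some ℓ) :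
    ∃ q, (play s fi fo fd fr n).length = n ∧
      play s fi fo fd fr (n + 1) = play s fi fo fd fr n ++ [(ℓ, q)] := by
  rw [outcomeTrace_eq] at h
  obtain ⟨p, hp, hpl⟩ := Option.map_eq_some_iff.1 h
  have hn1 : n < (play s fi fo fd fr (n + 1)).length := (List.getElem?_eq_some_iff.1 hp).1
  have hn2 := play_length_le (fi := fi) (fo := fo) (fd := fd) (fr := fr) (n + 1)
  have hn3 := play_length_succ_le (fi := fi) (fo := fo) (fd := fd) (fr := fr) n
  have hn4 := play_length_le (fi := fi) (fo := fo) (fd := fd) (fr := fr) n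
  have hlen : (play s fi fo fd fr n).length = n := by omega
  rcases gstep_cases (fi := fi) (fo := fo) (fd := fd) (fr := fr) (isPath_play n) with
    ⟨_, _, he⟩ | ⟨ℓ', q, he, _, _, _⟩
  · exfalso
    rw [play_succ, he] at hn1; omega
  · have he' : play s fi fo fd fr (n + 1) = play s fi fo fd fr n ++ [(ℓ', q)] := by
      rw [play_succ, he]
    rw [he'] at hp
    have hcl := List.getElem?_concat_length (l := play s fi fo fd fr n) (a := (ℓ', q))
    rw [hlen] at hcl
    rw [hcl] at hp
    cases hp
    exact ⟨q, hlen, by rw [he', ← hpl]⟩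

lemma outcome_of_concat {n : ℕ} {ℓ : In ⊕ Out} {q : State}
    (hlen : (play s fi fo fd fr n).length = n)
    (h : play s fi fo fd fr (n + 1) = play s fi fo fd fr n ++ [(ℓ, q)]) :
    outcomeTrace s fi fo fd fr n = some ℓ := by
  have hcl := List.getElem?_concat_length (l := play s fi fo fd fr n) (a := (ℓ, q))
  rw [hlen] at hcl
  rw [outcomeTrace_eq, h, hcl]
  rfl

lemma play_succ_eq_of_none {n : ℕ} (h : outcomeTrace s fi fo fd fr n = none) :
    play s fi fo fd fr (n + 1) = play s fi fo fd fr n := by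
  rcases Nat.lt_or_ge (play s fi fo fd fr n).length n with hlt | hge
  · exact play_succ_eq_of_lt hlt
  · have hlen : (play s fi fo fd fr n).length = n :=
      le_antisymm (play_length_le n) hge
    rcases gstep_cases (fi := fi) (fo := fo) (fd := fd) (fr := fr) (isPath_play n) with
      ⟨_, _, he⟩ | ⟨ℓ, q, he, _, _, _⟩
    · rw [play_succ, he]
    · exfalso
      have := outcome_of_concat hlen (by rw [play_succ, he])
      rw [this] at h; cases h

lemma length_play_mono_exact {j n : ℕ} (hjn : j ≤ n)
    (h : (play s fi fo fd fr n).length = n) : (play s fi fo fd fr j).length = j := by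
  by_contra hne
  have hlt : (play s fi fo fd fr j).length < j := lt_of_le_of_ne (play_length_le j) hne
  have : ∀ d, play s fi fo fd fr (j + d) = play s fi fo fd fr j := by
    intro d
    induction d with
    | zero => rfl
    | succ d ih =>
      have : (play s fi fo fd fr (j + d)).length < j + d := by rw [ih]; omega
      rw [← Nat.add_assoc, play_succ_eq_of_lt this, ih]
    
  have := this (n - j)
  rw [Nat.add_sub_cancel' hjn] at this
  rw [this] at h
  omega

end IAAux
namespace IAAux

open IA

variable {In Out State : Type} {s : IA In Out State}

lemma append_singleton_inj {π : Path In Out State} {e e' : (In ⊕ Out) × State}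
    (h : π ++ [e] = π ++ [e']) : e = e' := by simpa using h

variable {fi : InStrat s} {fo : OutStrat s} {fd : DetStrat s} {fr : RaceStrat In Out State}

lemma outcome_move {n : ℕ} {ℓ : In ⊕ Out}
    (h : outcomeTrace s fi fo fd fr n = some ℓ) :
    ∃ q, (play s fi fo fd fr n).length = n ∧
      play s fi fo fd fr (n + 1) = play s fi fo fd fr n ++ [(ℓ, q)] ∧
      fd.f (play s fi fo fd fr n) ℓ = some q ∧
      s.tr (lastState s (play s fi fo fd fr n)) ℓ q ∧
      ((∃ a, ℓ = Sum.inl a ∧ fi.f (play s fi fo fd fr n) = some a) ∨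
       (∃ x, ℓ = Sum.inr x ∧ fo.f (play s fi fo fd fr n) = some x)) := by
  obtain ⟨q, hlen, hcat⟩ := outcome_eq_some h
  rcases gstep_cases (fi := fi) (fo := fo) (fd := fd) (fr := fr) (isPath_play n) with
    ⟨_, _, he⟩ | ⟨ℓ', q', he, htr, hfd, hdis⟩
  · exfalso
    have : play s fi fo fd fr (n + 1) = play s fi fo fd fr n := by rw [play_succ, he]
    rw [this] at hcat
    have := congrArg List.length hcat
    simp at this
  · have he' : play s fi fo fd fr (n + 1) = play s fi fo fd fr n ++ [(ℓ', q')] := by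
      rw [play_succ, he]
    rw [he'] at hcat
    have := append_singleton_inj hcat
    have h1 : ℓ' = ℓ := congrArg Prod.fst this
    have h2 : q' = q := congrArg Prod.snd this
    subst h1; subst h2
    exact ⟨q', hlen, he', hfd, htr, hdis⟩

lemma outcome_inl {n : ℕ} {b : In}
    (h : outcomeTrace s fi fo fd fr n = some (Sum.inl b)) :
    fi.f (play s fi fo fd fr n) = some b := by
  obtain ⟨q, _, _, _, _, hdis⟩ := outcome_move h
  rcases hdis with ⟨a, ha, hf⟩ | ⟨x, hx, _⟩
  · cases ha; exact hf
  · cases hx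

lemma outcome_inr {n : ℕ} {x : Out}
    (h : outcomeTrace s fi fo fd fr n = some (Sum.inr x)) :
    fo.f (play s fi fo fd fr n) = some x := by
  obtain ⟨q, _, _, _, _, hdis⟩ := outcome_move h
  rcases hdis with ⟨a, ha, _⟩ | ⟨y, hy, hf⟩
  · cases ha
  · cases hy; exact hf

lemma after_concat (σ : List (In ⊕ Out)) (ℓ : In ⊕ Out) :
    s.after (σ ++ [ℓ]) = s.step (s.after σ) ℓ := by
  simp [IA.after, List.foldl_append]

lemma lastState_mem_after {π : Path In Out State} (hπ : IsPath s π) :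
    lastState s π ∈ s.after (π.map Prod.fst) := by
  induction π using List.reverseRecOn with
  | nil => exact Set.mem_singleton _
  | append_singleton π e ih =>
    rw [List.map_append, List.map_singleton, after_concat, lastState_concat]
    refine ⟨lastState s π, ih (isPath_prefix hπ), ?_⟩
    have := hπ π.length e (List.getElem?_concat_length (l := π) (a := e))
    rwa [show stateAt s (π ++ [e]) π.length = lastState s π from
      stateAt_prefix π [e] (le_refl _)] at this

lemma exists_path_of_mem_after {σ : List (In ⊕ Out)} {q : State}
    (h : q ∈ s.after σ) :
    ∃ π : Path In Out State, IsPath s π ∧ π.map Prod.fst = σ ∧ lastState s π = q := by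
  induction σ using List.reverseRecOn generalizing q with
  | nil =>
    refine ⟨[], isPath_nil, rfl, ?_⟩
    rcases h with rfl
    rfl
  | append_singleton σ ℓ ih =>
    rw [after_concat] at h
    obtain ⟨p, hp, htr⟩ := h
    obtain ⟨π, h1, h2, h3⟩ := ih hp
    exact ⟨π ++ [(ℓ, q)], isPath_concat h1 (h3 ▸ htr), by simp [h2], lastState_concat _ _⟩

lemma lastState_take {ρ : Path In Out State} {k : ℕ} (hk : k ≤ ρ.length) :
    lastState s (ρ.take k) = stateAt s ρ k := by
  cases k with
  | zero => rfl
  | succ m =>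
    have hlen : (ρ.take (m + 1)).length = m + 1 := by simp [hk]
    simp only [lastState, hlen, stateAt]
    rw [List.getElem?_take_of_lt (by omega)]

end IAAux
namespace IAAux

open IA

variable {In Out State State' : Type} {s : IA In Out State} {s' : IA In Out State'}

lemma traces_eq {fi : InStrat s} {fo : OutStrat s} {fd : DetStrat s} {fr : RaceStrat In Out State}
    {fi' : InStrat s'} {fo' : OutStrat s'} {fd' : DetStrat s'} {fr' : RaceStrat In Out State'}
    (hE : ∀ m, outcomeTrace s fi fo fd fr m = outcomeTrace s' fi' fo' fd' fr' m) :
    ∀ n, (play s fi fo fd fr n).map Prod.fst = (play s' fi' fo' fd' fr' n).map Prod.fst := by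
  intro n
  induction n with
  | zero => rfl
  | succ n ih =>
    cases hL : outcomeTrace s fi fo fd fr n with
    | none =>
      have hL' : outcomeTrace s' fi' fo' fd' fr' n = none := by rw [← hE n]; exact hL
      rw [play_succ_eq_of_none hL, play_succ_eq_of_none hL', ih]
    | some ℓ =>
      have hL' : outcomeTrace s' fi' fo' fd' fr' n = some ℓ := by rw [← hE n]; exact hL
      obtain ⟨q, _, hc⟩ := outcome_eq_some hL
      obtain ⟨q', _, hc'⟩ := outcome_eq_some hL'
      rw [hc, hc']
      simp [ih]

lemma gstep_out {fi : InStrat s} {fo : OutStrat s} {fd : DetStrat s} {fr : RaceStrat In Out State}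
    {π : Path In Out State} {x : Out} (hfo : fo.f π = some x) (hr : fr π = true) :
    gstep s fi fo fd fr π = push s fd π (Sum.inr x) := by
  unfold gstep
  cases hfi : fi.f π
  · rw [hfo]
  · rw [hfo, hr]
    simp

open Classical in
noncomputable def chooseSucc (s : IA In Out State) (q : State) (ℓ : In ⊕ Out) : Option State :=
  if h : ∃ q', s.tr q ℓ q' then some h.choose else none

lemma chooseSucc_isSome {q : State} {ℓ : In ⊕ Out} (h : ∃ q', s.tr q ℓ q') :
    (chooseSucc s q ℓ).isSome := by simp [chooseSucc, h]

lemma chooseSucc_valid {q q' : State} {ℓ : In ⊕ Out} (h : chooseSucc s q ℓ = some q') :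
    s.tr q ℓ q' := by
  unfold chooseSucc at h
  split at h
  · cases h
    exact Exists.choose_spec ‹_›
  · cases h

open Classical in
noncomputable def foA (s : IA In Out State) (ρ : Path In Out State) : OutStrat s where
  f := fun π => (ρ[π.length]?).bind (fun p =>
        Sum.elim (fun _ => none)
          (fun x => if ∃ q', s.tr (lastState s π) (Sum.inr x) q' then some x else none) p.1)
  valid := by
    intro π x hπ hfx
    cases hg : ρ[π.length]? with
    | none => rw [hg] at hfx; cases hfx
    | some p =>
      rw [hg] at hfx
      rw [Option.bind_some] at hfx
      cases hp1 : p.1 with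
      | inl b => rw [hp1] at hfx; cases hfx
      | inr y =>
        rw [hp1] at hfx
        simp only [Sum.elim_inr] at hfx
        split at hfx
        · cases hfx
          exact ‹_›
        · cases hfx

open Classical in
noncomputable def fdA (s : IA In Out State) (ρ : Path In Out State) (hρ : IsPath s ρ) :
    DetStrat s where
  f := fun π ℓ =>
    if π = ρ.take π.length ∧ ∃ p, ρ[π.length]? = some p ∧ p.1 = ℓ
    then (ρ[π.length]?).map Prod.snd
    else chooseSucc s (lastState s π) ℓ
  total := by
    intro π ℓ hπ hen
    split
    · next h =>
      obtain ⟨_, p, hp, _⟩ := h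
      rw [hp]
      rfl
    · exact chooseSucc_isSome hen
  valid := by
    intro π ℓ q' hπ heq
    split at heq
    · next h =>
      obtain ⟨hπρ, p, hp, hpl⟩ := h
      rw [hp] at heq
      have hq' : q' = p.2 := by simpa using heq.symm
      have hk : π.length < ρ.length := (List.getElem?_eq_some_iff.1 hp).1
      have htr := hρ π.length p hp
      have hlast : lastState s π = stateAt s ρ π.length := by
        conv_lhs => rw [hπρ]
        exact lastState_take (le_of_lt hk)
      rw [hlast, hq', ← hpl]
      exact htr
    · exact chooseSucc_valid heq

end IAAux
namespace IAAux

open IA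

variable {In Out State : Type} {s : IA In Out State}

open Classical in
lemma foA_f (ρ π : Path In Out State) :
    (foA s ρ).f π = (ρ[π.length]?).bind (fun p =>
      Sum.elim (fun _ => none)
        (fun x => if ∃ q', s.tr (lastState s π) (Sum.inr x) q' then some x else none) p.1) := rfl

open Classical in
lemma fdA_f (ρ : Path In Out State) (hρ : IsPath s ρ) (π : Path In Out State) (ℓ : In ⊕ Out) :
    (fdA s ρ hρ).f π ℓ =
      if π = ρ.take π.length ∧ ∃ p, ρ[π.length]? = some p ∧ p.1 = ℓ
      then (ρ[π.length]?).map Prod.snd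
      else chooseSucc s (lastState s π) ℓ := rfl

lemma lemA {In Out State1 State2 : Type} {s1 : IA In Out State1} {s2 : IA In Out State2}
    (hatc : refATC s1 s2) (fi2 : InStrat s2) (htb : TraceBased s2 fi2)
    (σ : List (In ⊕ Out)) (a : In)
    (hi : ∀ k b, σ[k]? = some (Sum.inl b) →
      ∃ π, IsPath s2 π ∧ π.map Prod.fst = σ.take k ∧ fi2.f π = some b)
    (hii : ∃ π, IsPath s2 π ∧ π.map Prod.fst = σ ∧ fi2.f π = some a)
    {q' : State1} (hq : q' ∈ s1.after σ) :
    ∃ q'', s1.tr q' (Sum.inl a) q'' := by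
  obtain ⟨ρ, hρP, hρσ, hρl⟩ := exists_path_of_mem_after hq
  have hρlen : ρ.length = σ.length := by rw [← hρσ]; simp
  obtain ⟨fo2, fd2, fr2, hm⟩ := hatc (foA s1 ρ) (fdA s1 ρ hρP) (fun _ => true)
  obtain ⟨fj1, hE⟩ := hm fi2
  have key : ∀ k, k ≤ ρ.length →
      play s1 fj1 (foA s1 ρ) (fdA s1 ρ hρP) (fun _ => true) k = ρ.take k ∧
      (play s2 fi2 fo2 fd2 fr2 k).map Prod.fst = σ.take k ∧
      (play s2 fi2 fo2 fd2 fr2 k).length = k := by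
    intro k
    induction k with
    | zero => intro _; exact ⟨rfl, rfl, rfl⟩
    | succ k IH =>
      intro hk1
      have hk : k < ρ.length := by omega
      obtain ⟨h1, h2, h3⟩ := IH (by omega)
      have hQ1len : (play s1 fj1 (foA s1 ρ) (fdA s1 ρ hρP) (fun _ => true) k).length = k := by
        rw [h1, List.length_take]; omega
      have hp : ρ[k]? = some (ρ.get ⟨k, hk⟩) := List.getElem?_eq_getElem hk
      set p := ρ.get ⟨k, hk⟩ with hpdef
      have hσk : σ[k]? = some p.1 := by
        rw [← hρσ, List.getElem?_map, hp]; rfl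
      have htrp : s1.tr (stateAt s1 ρ k) p.1 p.2 := hρP k p hp
      have hp' : ρ[k]? = some p := hp
      have hσk' : σ[k]? = some p.1 := hσk
      have htk : ρ.take (k + 1) = ρ.take k ++ [p] := by
        rw [List.take_succ, hp']; rfl
      have hstk : σ.take (k + 1) = σ.take k ++ [p.1] := by
        rw [List.take_succ, hσk']; rfl
      -- fdA takes the spine step
      have hfd : ∀ ℓ, p.1 = ℓ →
          (fdA s1 ρ hρP).f (play s1 fj1 (foA s1 ρ) (fdA s1 ρ hρP) (fun _ => true) k) ℓ
            = some p.2 := by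
        intro ℓ hℓ
        rw [fdA_f, if_pos ⟨by rw [hQ1len, h1], ⟨p, by rw [hQ1len]; exact hp, hℓ⟩⟩, hQ1len, hp]
        rfl
      cases hcase : p.1 with
      | inr x =>
        have hen : ∃ qq, s1.tr (lastState s1
            (play s1 fj1 (foA s1 ρ) (fdA s1 ρ hρP) (fun _ => true) k)) (Sum.inr x) qq := by
          rw [h1, lastState_take (le_of_lt hk)]
          exact ⟨p.2, hcase ▸ htrp⟩
        have hfo : (foA s1 ρ).f (play s1 fj1 (foA s1 ρ) (fdA s1 ρ hρP) (fun _ => true) k)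
            = some x := by
          rw [foA_f, hQ1len, hp, Option.bind_some, hcase]
          simp only [Sum.elim_inr, if_pos hen]
        have hcat1 : play s1 fj1 (foA s1 ρ) (fdA s1 ρ hρP) (fun _ => true) (k + 1)
            = play s1 fj1 (foA s1 ρ) (fdA s1 ρ hρP) (fun _ => true) k ++ [(Sum.inr x, p.2)] := by
          rw [play_succ, gstep_out hfo rfl]
          unfold IA.push
          rw [hfd (Sum.inr x) hcase]
        have hg1 : play s1 fj1 (foA s1 ρ) (fdA s1 ρ hρP) (fun _ => true) (k + 1)
            = ρ.take (k + 1) := by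
          rw [hcat1, h1, htk]
          congr 1
          rw [← hcase]
        have hL1 := outcome_of_concat hQ1len hcat1
        have hL2 : outcomeTrace s2 fi2 fo2 fd2 fr2 k = some (Sum.inr x) := by
          rw [← hE k]; exact hL1
        obtain ⟨q2, _, hcat2⟩ := outcome_eq_some hL2
        refine ⟨hg1, ?_, ?_⟩
        · rw [hcat2, List.map_append, h2, hstk, hcase]
          rfl
        · rw [hcat2]; simp [h3]
      | inl b =>
        obtain ⟨π₀, hπ₀P, hπ₀σ, hπ₀f⟩ := hi k b (hcase ▸ hσk)
        have hfi2 : fi2.f (play s2 fi2 fo2 fd2 fr2 k) = some b := by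
          rw [htb (play s2 fi2 fo2 fd2 fr2 k) π₀ (isPath_play k) hπ₀P (by rw [h2, hπ₀σ])]
          exact hπ₀f
        rcases gstep_cases (fi := fi2) (fo := fo2) (fd := fd2) (fr := fr2) (isPath_play k) with
          ⟨hf2n, _, _⟩ | ⟨ℓ, q2, hg2, htr2, hfd2, hdis2⟩
        · rw [hfi2] at hf2n; cases hf2n
        · have hcat2 : play s2 fi2 fo2 fd2 fr2 (k + 1)
              = play s2 fi2 fo2 fd2 fr2 k ++ [(ℓ, q2)] := by rw [play_succ, hg2]
          have hL2 : outcomeTrace s2 fi2 fo2 fd2 fr2 k = some ℓ := outcome_of_concat h3 hcat2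
          have hL1 : outcomeTrace s1 fj1 (foA s1 ρ) (fdA s1 ρ hρP) (fun _ => true) k = some ℓ :=
            (hE k).trans hL2
          rcases hdis2 with ⟨b', hb', hfb'⟩ | ⟨x, hx, hfo2x⟩
          · have hbb : b' = b := by
              rw [hfi2] at hfb'; exact (Option.some.injEq .. ▸ hfb'.symm)
            subst hbb; subst hb'
            obtain ⟨q1, hQ1len', hcat1, hfd1, htr1, hdis1⟩ := outcome_move hL1
            have hq1 : q1 = p.2 := by
              have h' := hfd (Sum.inl b') hcase
              rw [hfd1] at h'
              simpa using h'
            refine ⟨?_, ?_, ?_⟩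
            · rw [hcat1, hq1, h1, htk]
              congr 1
              rw [← hcase]
            · rw [hcat2, List.map_append, h2, hstk, hcase]
              rfl
            · rw [hcat2]; simp [h3]
          · exfalso
            subst hx
            have hfo1x := outcome_inr hL1
            rw [foA_f, hQ1len, hp, Option.bind_some, hcase] at hfo1x
            simp at hfo1x
  -- final step: position n = ρ.length
  obtain ⟨h1, h2, h3⟩ := key ρ.length (le_refl _)
  rw [List.take_length] at h1
  have h2' : (play s2 fi2 fo2 fd2 fr2 ρ.length).map Prod.fst = σ := by
    rw [h2, hρlen, List.take_length]
  obtain ⟨π₀, hπ₀P, hπ₀σ, hπ₀f⟩ := hii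
  have hfi2 : fi2.f (play s2 fi2 fo2 fd2 fr2 ρ.length) = some a := by
    rw [htb (play s2 fi2 fo2 fd2 fr2 ρ.length) π₀ (isPath_play ρ.length) hπ₀P
      (by rw [h2', hπ₀σ])]
    exact hπ₀f
  rcases gstep_cases (fi := fi2) (fo := fo2) (fd := fd2) (fr := fr2)
      (isPath_play (s := s2) ρ.length) with
    ⟨hf2n, _, _⟩ | ⟨ℓ, q2, hg2, htr2, hfd2, hdis2⟩
  · rw [hfi2] at hf2n; cases hf2n
  · have hcat2 : play s2 fi2 fo2 fd2 fr2 (ρ.length + 1)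
        = play s2 fi2 fo2 fd2 fr2 ρ.length ++ [(ℓ, q2)] := by rw [play_succ, hg2]
    have hL2 : outcomeTrace s2 fi2 fo2 fd2 fr2 ρ.length = some ℓ := outcome_of_concat h3 hcat2
    have hL1 : outcomeTrace s1 fj1 (foA s1 ρ) (fdA s1 ρ hρP) (fun _ => true) ρ.length = some ℓ :=
      (hE ρ.length).trans hL2
    rcases hdis2 with ⟨b', hb', hfb'⟩ | ⟨x, hx, hfo2x⟩
    · have hbb : b' = a := by
        rw [hfi2] at hfb'; exact (Option.some.injEq .. ▸ hfb'.symm)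
      subst hbb; subst hb'
      obtain ⟨q1, hQ1len', hcat1, hfd1, htr1, hdis1⟩ := outcome_move hL1
      rw [h1, hρl] at htr1
      exact ⟨q1, htr1⟩
    · exfalso
      subst hx
      have hfo1x := outcome_inr hL1
      have hQ1len : (play s1 fj1 (foA s1 ρ) (fdA s1 ρ hρP) (fun _ => true) ρ.length).length
          = ρ.length := by rw [h1]
      rw [foA_f, hQ1len, List.getElem?_eq_none (le_refl _), Option.bind_none] at hfo1x
      cases hfo1x

end IAAux
namespace IAAux

open IA

variable {In Out State : Type} {s : IA In Out State}

def matchIn {In Out : Type} : Option (In ⊕ Out) → Option In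
  | some (Sum.inl a) => some a
  | _ => none

lemma matchIn_eq_some {In Out : Type} {o : Option (In ⊕ Out)} {a : In} :
    matchIn o = some a ↔ o = some (Sum.inl a) := by
  cases o with
  | none => simp [matchIn]
  | some ℓ => cases ℓ <;> simp [matchIn]

open Classical in
noncomputable def mimicF (fi : InStrat s) (fo : OutStrat s) (fd : DetStrat s)
    (fr : RaceStrat In Out State) : Path In Out State → Option In := fun π =>
  if (play s fi fo fd fr (π.map Prod.fst).length).map Prod.fst = π.map Prod.fst
  then matchIn (outcomeTrace s fi fo fd fr (π.map Prod.fst).length) else none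

variable {fi : InStrat s} {fo : OutStrat s} {fd : DetStrat s} {fr : RaceStrat In Out State}

lemma mimicF_eq_some {π : Path In Out State} {a : In}
    (h : mimicF fi fo fd fr π = some a) :
    (play s fi fo fd fr (π.map Prod.fst).length).map Prod.fst = π.map Prod.fst ∧
    outcomeTrace s fi fo fd fr (π.map Prod.fst).length = some (Sum.inl a) := by
  unfold mimicF at h
  split at h
  · exact ⟨‹_›, matchIn_eq_some.1 h⟩
  · cases h

lemma mimicF_on_play (n : ℕ) :
    mimicF fi fo fd fr (play s fi fo fd fr n)
      = matchIn (outcomeTrace s fi fo fd fr ((play s fi fo fd fr n).length)) := by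
  unfold mimicF
  rw [List.length_map, if_pos]
  rw [play_self]

lemma mimicF_traceBased {π π' : Path In Out State}
    (h : π.map Prod.fst = π'.map Prod.fst) :
    mimicF fi fo fd fr π = mimicF fi fo fd fr π' := by
  unfold mimicF
  rw [h]

end IAAux
open IA in
theorem stmt16 (In Out State1 State2 : Type)
    (s1 : IA In Out State1) (s2 : IA In Out State2)
    (h : s1.refATC s2) : s1.refAAEEtb s2 := by
  intro fi2 htb fo1 fd1 fr1
  obtain ⟨fo2, fd2, fr2, hmain⟩ := h fo1 fd1 fr1
  obtain ⟨fi1, hE⟩ := hmain fi2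
  classical
  -- the trace-based mimicking input strategy on s1
  have hvalid : ∀ (π : Path In Out State1) (a : In), IsPath s1 π →
      IAAux.mimicF fi1 fo1 fd1 fr1 π = some a →
      ∃ q', s1.tr (lastState s1 π) (Sum.inl a) q' := by
    intro π a hπ hfa
    obtain ⟨hcond, hL⟩ := IAAux.mimicF_eq_some hfa
    set k := (π.map Prod.fst).length with hkdef
    obtain ⟨qk, hlenk, _⟩ := IAAux.outcome_eq_some hL
    -- apply the key lemma
    refine IAAux.lemA h fi2 htb (π.map Prod.fst) a ?_ ?_ (IAAux.lastState_mem_after hπ)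
    · -- every input along the trace is played by fi2
      intro j b hget
      have hj : j < k := by
        have := (List.getElem?_eq_some_iff.1 hget).1
        omega
      have hlenj : (IAAux.play s1 fi1 fo1 fd1 fr1 j).length = j :=
        IAAux.length_play_mono_exact (le_of_lt hj) hlenk
      have hlenj1 : (IAAux.play s1 fi1 fo1 fd1 fr1 (j + 1)).length = j + 1 :=
        IAAux.length_play_mono_exact (by omega) hlenk
      have hLj : outcomeTrace s1 fi1 fo1 fd1 fr1 j = some (Sum.inl b) := by
        rw [IAAux.outcomeTrace_eq]
        obtain ⟨t, ht⟩ := IAAux.play_prefix (fi := fi1) (fo := fo1) (fd := fd1) (fr := fr1)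
          (show j + 1 ≤ k by omega)
        rw [← List.getElem?_append_left (show j < (IAAux.play s1 fi1 fo1 fd1 fr1 (j + 1)).length by omega),
          ht, ← List.getElem?_map, hcond, hget]
      have hLj2 : outcomeTrace s2 fi2 fo2 fd2 fr2 j = some (Sum.inl b) := by
        rw [← hE j]; exact hLj
      refine ⟨IAAux.play s2 fi2 fo2 fd2 fr2 j, IAAux.isPath_play j, ?_, IAAux.outcome_inl hLj2⟩
      rw [← IAAux.traces_eq hE j, ← hcond]
      obtain ⟨t, ht⟩ := IAAux.play_prefix (fi := fi1) (fo := fo1) (fd := fd1) (fr := fr1)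
        (show j ≤ k from le_of_lt hj)
      have hlm : (List.map Prod.fst (IAAux.play s1 fi1 fo1 fd1 fr1 j)).length = j := by
        simp [hlenj]
      rw [← ht, List.map_append, List.take_left' hlm]
    · -- fi2 plays a at the full trace
      have hL2 : outcomeTrace s2 fi2 fo2 fd2 fr2 k = some (Sum.inl a) := by
        rw [← hE k]; exact hL
      exact ⟨IAAux.play s2 fi2 fo2 fd2 fr2 k, IAAux.isPath_play k,
        by rw [← IAAux.traces_eq hE k]; exact hcond, IAAux.outcome_inl hL2⟩
  set fi1' : InStrat s1 := ⟨IAAux.mimicF fi1 fo1 fd1 fr1, hvalid⟩ with hfi1'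
  have htb1 : TraceBased s1 fi1' := by
    intro π π' _ _ hm
    exact IAAux.mimicF_traceBased hm
  -- the play with fi1' coincides with the play with fi1
  have hplays : ∀ n, IAAux.play s1 fi1' fo1 fd1 fr1 n = IAAux.play s1 fi1 fo1 fd1 fr1 n := by
    intro n
    induction n with
    | zero => rfl
    | succ n ih =>
      rw [IAAux.play_succ, IAAux.play_succ, ih]
      have hfi'val : fi1'.f (IAAux.play s1 fi1 fo1 fd1 fr1 n)
          = IAAux.matchIn (outcomeTrace s1 fi1 fo1 fd1 fr1
              ((IAAux.play s1 fi1 fo1 fd1 fr1 n).length)) := IAAux.mimicF_on_play n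
      rcases Nat.lt_or_ge (IAAux.play s1 fi1 fo1 fd1 fr1 n).length n with hlt | hge
      · -- stalled play
        have hst := IAAux.stall_of_lt (fi := fi1) (fo := fo1) (fd := fd1) (fr := fr1) n hlt
        rcases IAAux.gstep_cases (fi := fi1) (fo := fo1) (fd := fd1) (fr := fr1)
            (IAAux.isPath_play n) with ⟨hfin, hfon, _⟩ | ⟨ℓ, q, he, _, _, _⟩
        · have hLj : outcomeTrace s1 fi1 fo1 fd1 fr1 ((IAAux.play s1 fi1 fo1 fd1 fr1 n).length)
              = none := by
            rw [IAAux.outcomeTrace_eq, IAAux.play_succ, IAAux.play_self, hst]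
            simp [List.getElem?_eq_none]
          have hfin' : fi1'.f (IAAux.play s1 fi1 fo1 fd1 fr1 n) = none := by
            rw [hfi'val, hLj]; rfl
          unfold IA.gstep
          rw [hfin', hfin, hfon]
        · exfalso
          have h2 := hst.symm.trans he
          have := congrArg List.length h2
          simp at this
      · have hlen : (IAAux.play s1 fi1 fo1 fd1 fr1 n).length = n :=
          le_antisymm (IAAux.play_length_le n) hge
        cases hL : outcomeTrace s1 fi1 fo1 fd1 fr1 n with
        | none =>
          rcases IAAux.gstep_cases (fi := fi1) (fo := fo1) (fd := fd1) (fr := fr1)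
              (IAAux.isPath_play n) with ⟨hfin, hfon, _⟩ | ⟨ℓ, q, he, _, _, _⟩
          · have hfin' : fi1'.f (IAAux.play s1 fi1 fo1 fd1 fr1 n) = none := by
              rw [hfi'val, hlen, hL]; rfl
            unfold IA.gstep
            rw [hfin', hfin, hfon]
          · exfalso
            have := IAAux.outcome_of_concat hlen (by rw [IAAux.play_succ, he])
            rw [this] at hL; cases hL
        | some ℓ =>
          obtain ⟨q, _, hcat, hfd, htr, hdis⟩ := IAAux.outcome_move hL
          rcases hdis with ⟨a, rfl, hfi⟩ | ⟨x, rfl, hfo⟩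
          · have hfin' : fi1'.f (IAAux.play s1 fi1 fo1 fd1 fr1 n) = some a := by
              rw [hfi'val, hlen, hL]; rfl
            unfold IA.gstep
            rw [hfin', hfi]
          · have hfin' : fi1'.f (IAAux.play s1 fi1 fo1 fd1 fr1 n) = none := by
              rw [hfi'val, hlen, hL]; rfl
            unfold IA.gstep
            rw [hfin', hfo]
            cases hfi : fi1.f (IAAux.play s1 fi1 fo1 fd1 fr1 n) with
            | none => rfl
            | some a =>
              by_cases hr : fr1 (IAAux.play s1 fi1 fo1 fd1 fr1 n)
              · rw [hr]; simp
              · exfalso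
                have hg : IA.gstep s1 fi1 fo1 fd1 fr1 (IAAux.play s1 fi1 fo1 fd1 fr1 n)
                    = IA.push s1 fd1 (IAAux.play s1 fi1 fo1 fd1 fr1 n) (Sum.inl a) := by
                  unfold IA.gstep
                  rw [hfi, hfo]
                  simp [hr]
                obtain ⟨q', _, _, hpsh⟩ := IAAux.push_eq (fd := fd1) (IAAux.isPath_play n)
                  (fi1.valid _ _ (IAAux.isPath_play n) hfi)
                have hcat' : IAAux.play s1 fi1 fo1 fd1 fr1 (n + 1)
                    = IAAux.play s1 fi1 fo1 fd1 fr1 n ++ [(Sum.inl a, q')] := by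
                  rw [IAAux.play_succ, hg, hpsh]
                rw [hcat'] at hcat
                have := IAAux.append_singleton_inj hcat
                cases this
          
  refine ⟨fi1', htb1, fo2, fd2, fr2, fun n => ?_⟩
  have heq1 : outcomeTrace s1 fi1' fo1 fd1 fr1 n = outcomeTrace s1 fi1 fo1 fd1 fr1 n := by
    rw [IAAux.outcomeTrace_eq, IAAux.outcomeTrace_eq, hplays (n + 1)]
  rw [heq1]
  exact hE n
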